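/- arXiv:2105.12866 — 3 statements merged into one kernel-verified Lean document; each statement's English description precedes it below -/
import Mathlib

section
/- Let m ∈ ℕ with m ≥ 1, and for each j = 1, …, m let w1ⱼ, b1ⱼ : ℝ^{n2} → ℝ^{n1} and w2ⱼ, b2ⱼ : ℝ^{n1} → ℝ^{n2} be continuous, and let F^{(j)}_Δt denote the ODE-style affine coupling pair with step Δt built from (w1ⱼ, b1ⱼ, w2ⱼ, b2ⱼ). Then there exists a function g_{[m]} : ℝ^{n1+n2} → ℝ^{n1+n2} such that for every y ∈ ℝ^{n1+n2}, lim_{Δt → 0⁺} ( (F^{(m)}_Δt ∘ ⋯ ∘ F^{(1)}_Δt)(y) − y ) / Δt = g_{[m]}(y); moreover g_{[m]}(y) = Σ_{j=1}^{m} g^{(j)}(y), where g^{(j)}(y1, y2) = (y1 ⊙ w1ⱼ(y2) + b1ⱼ(y2), y2 ⊙ w2ⱼ(y1) + b2ⱼ(y1)). Hence the m-fold composition of coupling pairs is a one-step discretization of the ODE dy/dt = g_{[m]}(y). -/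
open Filter Topology

/-- The `m`-fold composition of ODE-style affine coupling pairs (each with its own
continuous parameter functions, all with the same step `Δt`) satisfies
`lim_{Δt→0⁺} (F^{(m)}_Δt ∘ ⋯ ∘ F^{(1)}_Δt (y) − y)/Δt = Σ_{j=1}^m g^{(j)}(y)`,
where `g^{(j)}(y1,y2) = (y1 ⊙ w1ⱼ(y2) + b1ⱼ(y2), y2 ⊙ w2ⱼ(y1) + b2ⱼ(y1))`. -/
theorem coupling_composition_is_ode_discretization (n1 n2 m : ℕ) (hm : 1 ≤ m)
    (w1 b1 : ℕ → (Fin n2 → ℝ) → (Fin n1 → ℝ)) (w2 b2 : ℕ → (Fin n1 → ℝ) → (Fin n2 → ℝ))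
    (hw1 : ∀ j, Continuous (w1 j)) (hb1 : ∀ j, Continuous (b1 j))
    (hw2 : ∀ j, Continuous (w2 j)) (hb2 : ∀ j, Continuous (b2 j))
    (F : ℕ → ℝ → (Fin n1 → ℝ) × (Fin n2 → ℝ) → (Fin n1 → ℝ) × (Fin n2 → ℝ))
    (hF : ∀ (j : ℕ) (Δt : ℝ) (y : (Fin n1 → ℝ) × (Fin n2 → ℝ)),
      F j Δt y =
        (fun i => y.1 i + (y.1 i * w1 j y.2 i + b1 j y.2 i) * Δt,
         fun k => y.2 k +
           (y.2 k * w2 j (fun i => y.1 i + (y.1 i * w1 j y.2 i + b1 j y.2 i) * Δt) k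
             + b2 j (fun i => y.1 i + (y.1 i * w1 j y.2 i + b1 j y.2 i) * Δt) k) * Δt))
    (g : ℕ → (Fin n1 → ℝ) × (Fin n2 → ℝ) → (Fin n1 → ℝ) × (Fin n2 → ℝ))
    (hg : ∀ (j : ℕ) (y : (Fin n1 → ℝ) × (Fin n2 → ℝ)),
      g j y = (fun i => y.1 i * w1 j y.2 i + b1 j y.2 i,
               fun k => y.2 k * w2 j y.1 k + b2 j y.1 k)) :
    ∀ y : (Fin n1 → ℝ) × (Fin n2 → ℝ),
      Tendsto
        (fun Δt : ℝ => Δt⁻¹ • ((List.range m).foldl (fun u j => F j Δt u) y - y))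
        (𝓝[>] (0 : ℝ)) (𝓝 (∑ j ∈ Finset.range m, g j y)) := by
  intro y
  -- the "slope" function of each coupling pair
  set h : ℕ → ℝ → ((Fin n1 → ℝ) × (Fin n2 → ℝ)) → (Fin n1 → ℝ) × (Fin n2 → ℝ) :=
    fun j t u =>
      (fun i => u.1 i * w1 j u.2 i + b1 j u.2 i,
       fun k => u.2 k * w2 j (fun i => u.1 i + (u.1 i * w1 j u.2 i + b1 j u.2 i) * t) k
              + b2 j (fun i => u.1 i + (u.1 i * w1 j u.2 i + b1 j u.2 i) * t) k) with hh
  have hFh : ∀ j t u, F j t u = u + t • h j t u := by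
    intro j t u
    rw [hF]
    refine Prod.ext ?_ ?_ <;> funext i <;>
      simp [hh, Prod.fst_add, Prod.snd_add, Pi.add_apply, Pi.smul_apply, smul_eq_mul] <;> ring
  have hh0 : ∀ j u, h j 0 u = g j u := by
    intro j u
    rw [hg]
    simp [hh]
  have hhcont : ∀ j, Continuous (fun p : ℝ × ((Fin n1 → ℝ) × (Fin n2 → ℝ)) => h j p.1 p.2) := by
    intro j
    have hA : Continuous (fun p : ℝ × ((Fin n1 → ℝ) × (Fin n2 → ℝ)) =>
        (fun i => p.2.1 i + (p.2.1 i * w1 j p.2.2 i + b1 j p.2.2 i) * p.1 :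
          Fin n1 → ℝ)) := by
      apply continuous_pi
      intro i
      have h1 : Continuous (fun p : ℝ × ((Fin n1 → ℝ) × (Fin n2 → ℝ)) => p.2.1 i) :=
        (continuous_apply i).comp (continuous_fst.comp continuous_snd)
      have h2 : Continuous (fun p : ℝ × ((Fin n1 → ℝ) × (Fin n2 → ℝ)) => w1 j p.2.2 i) :=
        (continuous_apply i).comp ((hw1 j).comp (continuous_snd.comp continuous_snd))
      have h3 : Continuous (fun p : ℝ × ((Fin n1 → ℝ) × (Fin n2 → ℝ)) => b1 j p.2.2 i) :=
        (continuous_apply i).comp ((hb1 j).comp (continuous_snd.comp continuous_snd))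
      exact h1.add (((h1.mul h2).add h3).mul continuous_fst)
    refine Continuous.prodMk ?_ ?_
    · apply continuous_pi
      intro i
      have h1 : Continuous (fun p : ℝ × ((Fin n1 → ℝ) × (Fin n2 → ℝ)) => p.2.1 i) :=
        (continuous_apply i).comp (continuous_fst.comp continuous_snd)
      have h2 : Continuous (fun p : ℝ × ((Fin n1 → ℝ) × (Fin n2 → ℝ)) => w1 j p.2.2 i) :=
        (continuous_apply i).comp ((hw1 j).comp (continuous_snd.comp continuous_snd))
      have h3 : Continuous (fun p : ℝ × ((Fin n1 → ℝ) × (Fin n2 → ℝ)) => b1 j p.2.2 i) :=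
        (continuous_apply i).comp ((hb1 j).comp (continuous_snd.comp continuous_snd))
      exact (h1.mul h2).add h3
    · apply continuous_pi
      intro k
      have h1 : Continuous (fun p : ℝ × ((Fin n1 → ℝ) × (Fin n2 → ℝ)) => p.2.2 k) :=
        (continuous_apply k).comp (continuous_snd.comp continuous_snd)
      have h2 : Continuous (fun p : ℝ × ((Fin n1 → ℝ) × (Fin n2 → ℝ)) =>
          w2 j (fun i => p.2.1 i + (p.2.1 i * w1 j p.2.2 i + b1 j p.2.2 i) * p.1) k) :=
        (continuous_apply k).comp ((hw2 j).comp hA)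
      have h3 : Continuous (fun p : ℝ × ((Fin n1 → ℝ) × (Fin n2 → ℝ)) =>
          b2 j (fun i => p.2.1 i + (p.2.1 i * w1 j p.2.2 i + b1 j p.2.2 i) * p.1) k) :=
        (continuous_apply k).comp ((hb2 j).comp hA)
      exact (h1.mul h2).add h3
  -- key claim by induction
  have key : ∀ M : ℕ, ∃ H : ℝ → (Fin n1 → ℝ) × (Fin n2 → ℝ), Continuous H ∧
      H 0 = ∑ j ∈ Finset.range M, g j y ∧
      ∀ t, (List.range M).foldl (fun u j => F j t u) y = y + t • H t := by
    intro M
    induction M with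
    | zero =>
      refine ⟨fun _ => 0, continuous_const, by simp, fun t => by simp⟩
    | succ M ih =>
      obtain ⟨H, Hc, H0, Hfold⟩ := ih
      refine ⟨fun t => H t + h M t (y + t • H t), ?_, ?_, ?_⟩
      · exact Hc.add ((hhcont M).comp (continuous_id.prodMk
          (continuous_const.add (continuous_id.smul Hc))))
      · show H 0 + h M 0 (y + (0:ℝ) • H 0) = _
        rw [zero_smul, add_zero, H0, hh0, Finset.sum_range_succ]
      · intro t
        rw [List.range_succ, List.foldl_append, List.foldl_cons, List.foldl_nil,
          Hfold, hFh]
        rw [smul_add]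
        abel
  obtain ⟨H, Hc, H0, Hfold⟩ := key m
  have heq : ∀ t ∈ Set.Ioi (0:ℝ),
      t⁻¹ • ((List.range m).foldl (fun u j => F j t u) y - y) = H t := by
    intro t ht
    rw [Hfold t]
    simp only [add_sub_cancel_left, smul_smul, inv_mul_cancel₀ (ne_of_gt (Set.mem_Ioi.mp ht)), one_smul]
  have hlim : Tendsto H (𝓝[>] (0:ℝ)) (𝓝 (∑ j ∈ Finset.range m, g j y)) := by
    rw [← H0]
    exact (Hc.tendsto 0).mono_left nhdsWithin_le_nhds
  exact hlim.congr' ((eventually_mem_set.2 self_mem_nhdsWithin).mono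
    fun t ht => (heq t ht).symm)
end

section
/- Let w1, b1 : ℝ^{n2} → ℝ^{n1} and w2, b2 : ℝ^{n1} → ℝ^{n2} be functions whose components are bounded in absolute value by constants M1 and M2 respectively, and let Δt > 0 satisfy Δt·M1 < 1 and Δt·M2 < 1. Then the ODE-style affine coupling pair F_Δt is a bijection of ℝ^{n1} × ℝ^{n2}, with inverse given by y2 = (z2 − b2(z1)·Δt) / (1 + w2(z1)·Δt) followed by y1 = (z1 − b1(y2)·Δt) / (1 + w1(y2)·Δt), where the divisions are componentwise. -/
/-- If the components of `w1, b1` are bounded by `M1` and those of `w2, b2` by `M2`,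
and `Δt·M1 < 1`, `Δt·M2 < 1` with `Δt > 0`, then the ODE-style affine coupling pair
`F_Δt` is a bijection, with the explicit inverse obtained by first solving
`y2 = (z2 − b2(z1)Δt)/(1 + w2(z1)Δt)` and then `y1 = (z1 − b1(y2)Δt)/(1 + w1(y2)Δt)`. -/
theorem coupling_pair_bijective (n1 n2 : ℕ)
    (w1 b1 : (Fin n2 → ℝ) → (Fin n1 → ℝ)) (w2 b2 : (Fin n1 → ℝ) → (Fin n2 → ℝ))
    (M1 M2 : ℝ)
    (hw1 : ∀ x i, |w1 x i| ≤ M1) (hb1 : ∀ x i, |b1 x i| ≤ M1)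
    (hw2 : ∀ x j, |w2 x j| ≤ M2) (hb2 : ∀ x j, |b2 x j| ≤ M2)
    (Δt : ℝ) (hΔt : 0 < Δt) (hM1 : Δt * M1 < 1) (hM2 : Δt * M2 < 1)
    (F G : (Fin n1 → ℝ) × (Fin n2 → ℝ) → (Fin n1 → ℝ) × (Fin n2 → ℝ))
    (hF : ∀ y : (Fin n1 → ℝ) × (Fin n2 → ℝ),
      F y =
        (fun i => y.1 i + (y.1 i * w1 y.2 i + b1 y.2 i) * Δt,
         fun j => y.2 j +
           (y.2 j * w2 (fun i => y.1 i + (y.1 i * w1 y.2 i + b1 y.2 i) * Δt) j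
             + b2 (fun i => y.1 i + (y.1 i * w1 y.2 i + b1 y.2 i) * Δt) j) * Δt))
    (hG : ∀ z : (Fin n1 → ℝ) × (Fin n2 → ℝ),
      G z =
        (fun i => (z.1 i
            - b1 (fun j => (z.2 j - b2 z.1 j * Δt) / (1 + w2 z.1 j * Δt)) i * Δt)
          / (1 + w1 (fun j => (z.2 j - b2 z.1 j * Δt) / (1 + w2 z.1 j * Δt)) i * Δt),
         fun j => (z.2 j - b2 z.1 j * Δt) / (1 + w2 z.1 j * Δt))) :
    Function.Bijective F ∧ Function.LeftInverse G F ∧ Function.RightInverse G F := by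

  have pos : ∀ (w M : ℝ), |w| ≤ M → Δt * M < 1 → 0 < 1 + w * Δt := by
    intro w M hw hM
    rcases abs_le.1 hw with ⟨h1, _⟩
    nlinarith
  have L : Function.LeftInverse G F := by
    intro y
    rw [hF y, hG]
    simp only
    have h2 : (fun j => ((y.2 j +
          (y.2 j * w2 (fun i => y.1 i + (y.1 i * w1 y.2 i + b1 y.2 i) * Δt) j
            + b2 (fun i => y.1 i + (y.1 i * w1 y.2 i + b1 y.2 i) * Δt) j) * Δt)
          - b2 (fun i => y.1 i + (y.1 i * w1 y.2 i + b1 y.2 i) * Δt) j * Δt)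
        / (1 + w2 (fun i => y.1 i + (y.1 i * w1 y.2 i + b1 y.2 i) * Δt) j * Δt)) = y.2 := by
      funext j
      have hne := (pos _ _ (hw2 (fun i => y.1 i + (y.1 i * w1 y.2 i + b1 y.2 i) * Δt) j) hM2).ne'
      rw [div_eq_iff hne]
      ring
    rw [h2]
    refine Prod.ext ?_ rfl
    funext i
    have hne := (pos _ _ (hw1 y.2 i) hM1).ne'
    field_simp
    ring
  have R : Function.RightInverse G F := by
    intro z
    rw [hG z, hF]
    simp only
    have h1 : (fun i => ((z.1 i
          - b1 (fun j => (z.2 j - b2 z.1 j * Δt) / (1 + w2 z.1 j * Δt)) i * Δt)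
        / (1 + w1 (fun j => (z.2 j - b2 z.1 j * Δt) / (1 + w2 z.1 j * Δt)) i * Δt)
        + (((z.1 i - b1 (fun j => (z.2 j - b2 z.1 j * Δt) / (1 + w2 z.1 j * Δt)) i * Δt)
          / (1 + w1 (fun j => (z.2 j - b2 z.1 j * Δt) / (1 + w2 z.1 j * Δt)) i * Δt))
          * w1 (fun j => (z.2 j - b2 z.1 j * Δt) / (1 + w2 z.1 j * Δt)) i
          + b1 (fun j => (z.2 j - b2 z.1 j * Δt) / (1 + w2 z.1 j * Δt)) i) * Δt)) = z.1 := by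
      funext i
      have hne := (pos _ _ (hw1 (fun j => (z.2 j - b2 z.1 j * Δt) / (1 + w2 z.1 j * Δt)) i) hM1).ne'
      linear_combination div_mul_cancel₀ (z.1 i
          - b1 (fun j => (z.2 j - b2 z.1 j * Δt) / (1 + w2 z.1 j * Δt)) i * Δt) hne
    rw [h1]
    refine Prod.ext rfl ?_
    funext j
    have hne := (pos _ _ (hw2 z.1 j) hM2).ne'
    linear_combination div_mul_cancel₀ (z.2 j - b2 z.1 j * Δt) hne
  exact ⟨⟨L.injective, R.surjective⟩, L, R⟩
end

section
/- In the setting of the adjoint method for a chain of parameterized invertible maps (forward states y_{[i]}, adjoints λ_{[i]}, loss L, and functions g_{[i]} as defined there), suppose the parameters are tied: θ_{[i]} = θ for all i in a subset 𝓘 ⊆ {0, 1, …, n−1}, with the remaining parameters held fixed. Then the gradient of L with respect to the shared parameter θ equals Σ_{i ∈ 𝓘} [ (∂F_{[i]}/∂θ(y_{[i]}, θ))ᵀ λ_{[i]} − ∇_θ g_{[i]}(y_{[i]}, θ) ]. -/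
noncomputable def adjointAuxD {d p : ℕ} (A : ℕ → ((Fin d → ℝ) →L[ℝ] (Fin d → ℝ)))
    (B : ℕ → ((Fin p → ℝ) →L[ℝ] (Fin d → ℝ))) : ℕ → ((Fin p → ℝ) →L[ℝ] (Fin d → ℝ))
  | 0 => 0
  | (m + 1) => (A m).comp (adjointAuxD A B m) + B m

lemma clm_pi_expand {d : ℕ} {M : Type*} [AddCommMonoid M] [Module ℝ M] [TopologicalSpace M]
    (T : (Fin d → ℝ) →L[ℝ] M) (v : Fin d → ℝ) :
    T v = ∑ j, v j • T (Pi.single j 1) := by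
  conv_lhs => rw [pi_eq_sum_univ v]
  rw [map_sum]
  refine Finset.sum_congr rfl fun j _ => ?_
  rw [map_smul]
  congr 2
  funext j'
  simp [Pi.single_apply, eq_comm]

lemma clm_pi_expand_real {d : ℕ} (T : (Fin d → ℝ) →L[ℝ] ℝ) (v : Fin d → ℝ) :
    T v = ∑ j, v j * T (Pi.single j 1) := by
  simpa [smul_eq_mul] using clm_pi_expand T v

lemma clm_pi_expand_coord {d d' : ℕ} (T : (Fin d → ℝ) →L[ℝ] (Fin d' → ℝ)) (v : Fin d → ℝ)
    (j' : Fin d') : T v j' = ∑ j, v j * T (Pi.single j 1) j' := by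
  rw [clm_pi_expand T v]
  simp [Finset.sum_apply]

/-- Adjoint method with tied parameters: if `θ_{[i]} = θ` for all `i` in a subset
`𝓘 ⊆ {0, …, n−1}` (the remaining parameters held fixed), the gradient of the loss with
respect to the shared parameter `θ` is
`Σ_{i ∈ 𝓘} [(∂F_{[i]}/∂θ(y_{[i]}, θ))ᵀ λ_{[i]} − ∇_θ g_{[i]}(y_{[i]}, θ)]`. -/
theorem adjoint_method_tied_parameters (d p n : ℕ) (hn : 1 ≤ n)
    (y : Fin d → ℝ)
    (F : ℕ → (Fin d → ℝ) → (Fin p → ℝ) → (Fin d → ℝ))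
    (hF : ∀ i, ContDiff ℝ 1 (fun q : (Fin d → ℝ) × (Fin p → ℝ) => F i q.1 q.2))
    (hFdet : ∀ i u θ, LinearMap.det (fderiv ℝ (fun u' => F i u' θ) u).toLinearMap ≠ 0)
    (g : ℕ → (Fin d → ℝ) → (Fin p → ℝ) → ℝ)
    (hg : ∀ i u θ,
      g i u θ = Real.log |LinearMap.det (fderiv ℝ (fun u' => F i u' θ) u).toLinearMap|)
    (hgC1 : ∀ i, ContDiff ℝ 1 (fun q : (Fin d → ℝ) × (Fin p → ℝ) => g i q.1 q.2))
    (pZ : (Fin d → ℝ) → ℝ) (hpZ : ContDiff ℝ 1 pZ) (hpZpos : ∀ z, 0 < pZ z)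
    (Θ : ℕ → (Fin p → ℝ))
    (fwd : (ℕ → (Fin p → ℝ)) → ℕ → (Fin d → ℝ))
    (hfwd0 : ∀ P, fwd P 0 = y)
    (hfwds : ∀ P k, fwd P (k + 1) = F k (fwd P k) (P k))
    (L : (ℕ → (Fin p → ℝ)) → ℝ)
    (hL : ∀ P, L P = -Real.log (pZ (fwd P n))
      - ∑ k ∈ Finset.range n, g k (fwd P k) (P k))
    (lam : ℕ → (Fin d → ℝ))
    (hlam_top : lam (n - 1) = fun k =>
      -(fderiv ℝ (fun z => Real.log (pZ z)) (fwd Θ n) (Pi.single k 1)))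
    (hlam_rec : ∀ i, 1 ≤ i → i ≤ n - 1 → lam (i - 1) = fun k =>
      (∑ j, fderiv ℝ (fun u => F i u (Θ i)) (fwd Θ i) (Pi.single k 1) j * lam i j)
        - fderiv ℝ (fun u => g i u (Θ i)) (fwd Θ i) (Pi.single k 1))
    -- tied parameters on the index set 𝓘
    (I : Finset ℕ) (hI : I ⊆ Finset.range n)
    (θ0 : Fin p → ℝ) (hΘI : ∀ i ∈ I, Θ i = θ0) :
    ∀ k : Fin p,
      fderiv ℝ (fun θ => L (fun i => if i ∈ I then θ else Θ i)) θ0 (Pi.single k 1)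
        = ∑ i ∈ I,
            ((∑ j, fderiv ℝ (fun θ => F i (fwd Θ i) θ) (Θ i) (Pi.single k 1) j * lam i j)
              - fderiv ℝ (fun θ => g i (fwd Θ i) θ) (Θ i) (Pi.single k 1)) := by
  intro k
  -- abbreviations
  set e : Fin p → ℝ := Pi.single k 1 with he
  set P : (Fin p → ℝ) → ℕ → (Fin p → ℝ) := fun θ i => if i ∈ I then θ else Θ i with hPdef
  obtain ⟨A, hAdef⟩ : ∃ A : ℕ → ((Fin d → ℝ) →L[ℝ] (Fin d → ℝ)),
      ∀ i, A i = fderiv ℝ (fun u => F i u (Θ i)) (fwd Θ i) := ⟨_, fun _ => rfl⟩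
  obtain ⟨Bf, hBdef⟩ : ∃ Bf : ℕ → ((Fin p → ℝ) →L[ℝ] (Fin d → ℝ)),
      ∀ i, Bf i = fderiv ℝ (fun θ => F i (fwd Θ i) θ) (Θ i) := ⟨_, fun _ => rfl⟩
  obtain ⟨Gu, hGudef⟩ : ∃ Gu : ℕ → ((Fin d → ℝ) →L[ℝ] ℝ),
      ∀ i, Gu i = fderiv ℝ (fun u => g i u (Θ i)) (fwd Θ i) := ⟨_, fun _ => rfl⟩
  obtain ⟨Gt, hGtdef⟩ : ∃ Gt : ℕ → ((Fin p → ℝ) →L[ℝ] ℝ),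
      ∀ i, Gt i = fderiv ℝ (fun θ => g i (fwd Θ i) θ) (Θ i) := ⟨_, fun _ => rfl⟩
  obtain ⟨DF, hDFdef⟩ : ∃ DF : ℕ → (((Fin d → ℝ) × (Fin p → ℝ)) →L[ℝ] (Fin d → ℝ)),
      ∀ i, DF i = fderiv ℝ (fun q : (Fin d → ℝ) × (Fin p → ℝ) => F i q.1 q.2) (fwd Θ i, Θ i) :=
    ⟨_, fun _ => rfl⟩
  obtain ⟨DG, hDGdef⟩ : ∃ DG : ℕ → (((Fin d → ℝ) × (Fin p → ℝ)) →L[ℝ] ℝ),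
      ∀ i, DG i = fderiv ℝ (fun q : (Fin d → ℝ) × (Fin p → ℝ) => g i q.1 q.2) (fwd Θ i, Θ i) :=
    ⟨_, fun _ => rfl⟩
  set Z : (Fin d → ℝ) →L[ℝ] ℝ := fderiv ℝ (fun z => Real.log (pZ z)) (fwd Θ n) with hZdef
  set B' : ℕ → ((Fin p → ℝ) →L[ℝ] (Fin d → ℝ)) := fun i => if i ∈ I then Bf i else 0 with hB'def
  set Gt' : ℕ → ((Fin p → ℝ) →L[ℝ] ℝ) := fun i => if i ∈ I then Gt i else 0 with hGt'def
  set D : ℕ → ((Fin p → ℝ) →L[ℝ] (Fin d → ℝ)) := adjointAuxD A B' with hDdef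
  set w : ℕ → (Fin d → ℝ) := fun m => D m e with hwdef
  simp only [← hAdef, ← hGudef] at hlam_rec

  simp only [← hBdef, ← hGtdef]
  -- basic facts
  have hP0 : P θ0 = Θ := by
    funext i
    simp only [hPdef]
    split
    · exact (hΘI i ‹_›).symm
    · rfl
  -- full derivatives
  have hDF' : ∀ i, HasFDerivAt (fun q : (Fin d → ℝ) × (Fin p → ℝ) => F i q.1 q.2)
      (DF i) (fwd Θ i, Θ i) := fun i =>
    (hDFdef i) ▸ (((hF i).differentiable one_ne_zero) _).hasFDerivAt
  have hDG' : ∀ i, HasFDerivAt (fun q : (Fin d → ℝ) × (Fin p → ℝ) => g i q.1 q.2)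
      (DG i) (fwd Θ i, Θ i) := fun i =>
    (hDGdef i) ▸ (((hgC1 i).differentiable one_ne_zero) _).hasFDerivAt
  -- partial derivative identifications
  have hApart : ∀ i, A i = (DF i).comp (ContinuousLinearMap.inl ℝ _ _) := by
    intro i
    rw [hAdef i]
    exact ((hDF' i).comp (fwd Θ i) (hasFDerivAt_prodMk_left (𝕜 := ℝ) (fwd Θ i) (Θ i))).fderiv
  have hBpart : ∀ i, Bf i = (DF i).comp (ContinuousLinearMap.inr ℝ _ _) := by
    intro i
    rw [hBdef i]
    exact ((hDF' i).comp (Θ i) (hasFDerivAt_prodMk_right (fwd Θ i) (Θ i))).fderiv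
  have hGupart : ∀ i, Gu i = (DG i).comp (ContinuousLinearMap.inl ℝ _ _) := by
    intro i
    rw [hGudef i]
    exact ((hDG' i).comp (fwd Θ i) (hasFDerivAt_prodMk_left (𝕜 := ℝ) (fwd Θ i) (Θ i))).fderiv
  have hGtpart : ∀ i, Gt i = (DG i).comp (ContinuousLinearMap.inr ℝ _ _) := by
    intro i
    rw [hGtdef i]
    exact ((hDG' i).comp (Θ i) (hasFDerivAt_prodMk_right (fwd Θ i) (Θ i))).fderiv
  have hsplitF : ∀ i (v : Fin d → ℝ) (u : Fin p → ℝ), DF i (v, u) = A i v + Bf i u := by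
    intro i v u
    have h : ((v, u) : (Fin d → ℝ) × (Fin p → ℝ)) = (v, 0) + (0, u) := by simp
    rw [h, map_add, hApart i, hBpart i]
    simp
  have hsplitG : ∀ i (v : Fin d → ℝ) (u : Fin p → ℝ), DG i (v, u) = Gu i v + Gt i u := by
    intro i v u
    have h : ((v, u) : (Fin d → ℝ) × (Fin p → ℝ)) = (v, 0) + (0, u) := by simp
    rw [h, map_add, hGupart i, hGtpart i]
    simp
  have hA' : ∀ i, HasFDerivAt (fun u => F i u (Θ i)) (A i) (fwd Θ i) := by
    intro i
    rw [hApart i]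
    exact (hDF' i).comp (fwd Θ i) (hasFDerivAt_prodMk_left (𝕜 := ℝ) (fwd Θ i) (Θ i))
  -- forward sensitivity
  have hfwdD : ∀ m, HasFDerivAt (fun θ => fwd (P θ) m) (D m) θ0 := by
    intro m
    induction m with
    | zero =>
      have h0 : (fun θ : Fin p → ℝ => fwd (P θ) 0) = fun _ => y := funext fun θ => hfwd0 _
      rw [h0]
      exact hasFDerivAt_const y θ0
    | succ m IH =>
      have hstep : (fun θ : Fin p → ℝ => fwd (P θ) (m + 1))
          = fun θ => F m (fwd (P θ) m) (P θ m) := funext fun θ => hfwds _ _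
      rw [hstep]
      by_cases hm : m ∈ I
      · have hΘm : Θ m = θ0 := hΘI m hm
        have hfun : (fun θ : Fin p → ℝ => F m (fwd (P θ) m) (P θ m))
            = (fun q : (Fin d → ℝ) × (Fin p → ℝ) => F m q.1 q.2)
              ∘ (fun θ : Fin p → ℝ => (fwd (P θ) m, θ)) := by
          funext θ
          simp [hPdef, Function.comp, hm]
        have hpt : (fwd Θ m, Θ m) = ((fwd (P θ0) m, θ0) : (Fin d → ℝ) × (Fin p → ℝ)) := by
          rw [hP0, hΘm]
        have hcomp := HasFDerivAt.comp (x := θ0) (hpt ▸ hDF' m)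
          (IH.prodMk (hasFDerivAt_id θ0))
        have hder : (DF m).comp ((D m).prod (ContinuousLinearMap.id ℝ (Fin p → ℝ)))
            = D (m + 1) := by
          refine ContinuousLinearMap.ext fun x => ?_
          have hd : D (m + 1) = (A m).comp (D m) + B' m := rfl
          rw [hd]
          simp [ContinuousLinearMap.comp_apply, hsplitF m, hB'def, hm]
        rw [hfun, ← hder]
        exact hcomp
      · have hfun : (fun θ : Fin p → ℝ => F m (fwd (P θ) m) (P θ m))
            = (fun u => F m u (Θ m)) ∘ (fun θ : Fin p → ℝ => fwd (P θ) m) := by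
          funext θ
          simp [hPdef, Function.comp, hm]
        have hx : fwd Θ m = fwd (P θ0) m := by rw [hP0]
        have hcomp := HasFDerivAt.comp (x := θ0) (hx ▸ hA' m) IH
        have hder : (A m).comp (D m) = D (m + 1) := by
          refine ContinuousLinearMap.ext fun x => ?_
          have hd : D (m + 1) = (A m).comp (D m) + B' m := rfl
          rw [hd]
          simp [hB'def, hm]
        rw [hfun, ← hder]
        exact hcomp
  -- derivative of each g-term
  have hGu' : ∀ i, HasFDerivAt (fun u => g i u (Θ i)) (Gu i) (fwd Θ i) := by
    intro i
    rw [hGupart i]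
    exact (hDG' i).comp (fwd Θ i) (hasFDerivAt_prodMk_left (𝕜 := ℝ) (fwd Θ i) (Θ i))
  have hgD : ∀ m, HasFDerivAt (fun θ => g m (fwd (P θ) m) (P θ m))
      ((Gu m).comp (D m) + Gt' m) θ0 := by
    intro m
    by_cases hm : m ∈ I
    · have hΘm : Θ m = θ0 := hΘI m hm
      have hfun : (fun θ : Fin p → ℝ => g m (fwd (P θ) m) (P θ m))
          = (fun q : (Fin d → ℝ) × (Fin p → ℝ) => g m q.1 q.2)
            ∘ (fun θ : Fin p → ℝ => (fwd (P θ) m, θ)) := by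
        funext θ
        simp [hPdef, Function.comp, hm]
      have hpt : (fwd Θ m, Θ m) = ((fwd (P θ0) m, θ0) : (Fin d → ℝ) × (Fin p → ℝ)) := by
        rw [hP0, hΘm]
      have hcomp := HasFDerivAt.comp (x := θ0) (hpt ▸ hDG' m)
        ((hfwdD m).prodMk (hasFDerivAt_id θ0))
      have hder : (DG m).comp ((D m).prod (ContinuousLinearMap.id ℝ (Fin p → ℝ)))
          = (Gu m).comp (D m) + Gt' m := by
        refine ContinuousLinearMap.ext fun x => ?_
        simp [ContinuousLinearMap.comp_apply, hsplitG m, hGt'def, hm]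
      rw [hfun, ← hder]
      exact hcomp
    · have hfun : (fun θ : Fin p → ℝ => g m (fwd (P θ) m) (P θ m))
          = (fun u => g m u (Θ m)) ∘ (fun θ : Fin p → ℝ => fwd (P θ) m) := by
        funext θ
        simp [hPdef, Function.comp, hm]
      have hx : fwd Θ m = fwd (P θ0) m := by rw [hP0]
      have hcomp := HasFDerivAt.comp (x := θ0) (hx ▸ hGu' m) (hfwdD m)
      have hder : (Gu m).comp (D m) = (Gu m).comp (D m) + Gt' m := by
        simp [hGt'def, hm]
      rw [hfun, ← hder] at *
      exact hder ▸ hcomp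
  -- derivative of the log-prior term
  have hZ' : HasFDerivAt (fun z => Real.log (pZ z)) Z (fwd Θ n) := by
    rw [hZdef]
    refine DifferentiableAt.hasFDerivAt ?_
    exact (Real.differentiableAt_log (ne_of_gt (hpZpos _))).comp _
      ((hpZ.differentiable one_ne_zero) _)
  have hlogD : HasFDerivAt (fun θ => Real.log (pZ (fwd (P θ) n))) (Z.comp (D n)) θ0 := by
    have hx : fwd Θ n = fwd (P θ0) n := by rw [hP0]
    exact HasFDerivAt.comp (x := θ0) (hx ▸ hZ') (hfwdD n)
  -- total derivative of the loss
  have hmain : HasFDerivAt (fun θ => L (P θ))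
      (-(Z.comp (D n)) - ∑ i ∈ Finset.range n, ((Gu i).comp (D i) + Gt' i)) θ0 := by
    have hLfun : (fun θ : Fin p → ℝ => L (P θ))
        = fun θ => -Real.log (pZ (fwd (P θ) n))
            - ∑ i ∈ Finset.range n, g i (fwd (P θ) i) (P θ i) := funext fun θ => hL _
    rw [hLfun]
    exact (hlogD.neg).sub (HasFDerivAt.fun_sum fun i _ => hgD i)
  
  -- key adjoint transpose identity
  have hexpA : ∀ i (v : Fin d → ℝ) (j' : Fin d), A i v j' = ∑ j, v j * A i (Pi.single j 1) j' :=
    fun i v j' => clm_pi_expand_coord (A i) v j'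
  have hkey : ∀ i, 1 ≤ i → i ≤ n - 1 → ∀ v : Fin d → ℝ,
      (∑ j, v j * lam (i - 1) j) = (∑ j, A i v j * lam i j) - Gu i v := by
    intro i h1 h2 v
    simp only [hlam_rec i h1 h2]
    have hGuv : Gu i v = ∑ j, v j * Gu i (Pi.single j 1) := clm_pi_expand_real (Gu i) v
    simp only [mul_sub]
    rw [Finset.sum_sub_distrib]
    congr 1
    · calc ∑ j, v j * (∑ x, A i (Pi.single j 1) x * lam i x)
          = ∑ j, ∑ x, v j * A i (Pi.single j 1) x * lam i x := by
            simp only [Finset.mul_sum, mul_assoc]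
        _ = ∑ x, ∑ j, v j * A i (Pi.single j 1) x * lam i x := Finset.sum_comm
        _ = ∑ x, (∑ j, v j * A i (Pi.single j 1) x) * lam i x := by
            simp only [Finset.sum_mul]
        _ = ∑ x, A i v x * lam i x := by
            refine Finset.sum_congr rfl fun x _ => ?_
            rw [← hexpA i v x]
    · exact hGuv.symm
  -- recurrence for the tangent vectors
  have hw0 : w 0 = (0 : Fin d → ℝ) := by simp only [hwdef, hDdef, adjointAuxD]; rfl
  have hws : ∀ m, w (m + 1) = A m (w m) + (if m ∈ I then Bf m e else 0) := by
    intro m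
    have hd : D (m + 1) = (A m).comp (D m) + B' m := rfl
    simp only [hwdef, hd, ContinuousLinearMap.add_apply, ContinuousLinearMap.comp_apply]
    congr 1
    simp only [hB'def]
    by_cases hm : m ∈ I <;> simp [hm]
  -- telescoping identity
  have htel : ∀ m, m ≤ n - 1 →
      (∑ j, w (m + 1) j * lam m j)
        = (∑ i ∈ Finset.range (m + 1), if i ∈ I then (∑ j, Bf i e j * lam i j) else 0)
          + ∑ i ∈ Finset.range (m + 1), Gu i (w i) := by
    intro m
    induction m with
    | zero =>
      intro _
      rw [hws 0, hw0]
      by_cases h0 : 0 ∈ I <;> simp [h0, hw0]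
    | succ m IH =>
      intro hm
      have hm' : m ≤ n - 1 := le_trans (Nat.le_succ m) hm
      have h1 : 1 ≤ m + 1 := Nat.succ_le_succ (Nat.zero_le m)
      have hk := hkey (m + 1) h1 hm (w (m + 1))
      rw [Nat.add_sub_cancel] at hk
      rw [hws (m + 1)]
      have hsum : (∑ j, (A (m+1) (w (m+1)) + if m+1 ∈ I then Bf (m+1) e else 0) j * lam (m+1) j)
          = (∑ j, A (m+1) (w (m+1)) j * lam (m+1) j)
            + ∑ j, (if m+1 ∈ I then Bf (m+1) e else 0) j * lam (m+1) j := by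
        rw [← Finset.sum_add_distrib]
        refine Finset.sum_congr rfl fun j _ => ?_
        simp [add_mul]
      rw [hsum]
      have h2 : (∑ j, A (m+1) (w (m+1)) j * lam (m+1) j)
          = (∑ j, w (m+1) j * lam m j) + Gu (m+1) (w (m+1)) := by
        rw [hk]; ring
      have h3 : (∑ j, (if m+1 ∈ I then Bf (m+1) e else 0) j * lam (m+1) j)
          = if m+1 ∈ I then (∑ j, Bf (m+1) e j * lam (m+1) j) else 0 := by
        by_cases hmi : m+1 ∈ I <;> simp [hmi]
      rw [h2, h3, IH hm',
        Finset.sum_range_succ (fun i => if i ∈ I then (∑ j, Bf i e j * lam i j) else 0) (m+1),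
        Finset.sum_range_succ (fun i => Gu i (w i)) (m+1)]
      ring
  have hnn : n - 1 + 1 = n := Nat.succ_pred_eq_of_pos hn
  have hfin := htel (n - 1) le_rfl
  rw [hnn] at hfin
  have hZw : (∑ j, w n j * lam (n - 1) j) = -(Z (w n)) := by
    rw [hlam_top, clm_pi_expand_real Z (w n)]
    simp [mul_neg]
  -- evaluate the total derivative at e
  have hgoalL : fderiv ℝ (fun θ => L fun i => if i ∈ I then θ else Θ i) θ0 e
      = -(Z (w n)) - ∑ i ∈ Finset.range n, (Gu i (w i) + (if i ∈ I then Gt i e else 0)) := by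
    have h1 : (fun θ : Fin p → ℝ => L fun i => if i ∈ I then θ else Θ i)
        = fun θ => L (P θ) := rfl
    rw [h1, hmain.fderiv]
    simp [hwdef, hGt'def, apply_ite (fun T : (Fin p → ℝ) →L[ℝ] ℝ => T e)]
  -- assemble
  have hassemble : -(Z (w n)) - (∑ i ∈ Finset.range n, (Gu i (w i) + (if i ∈ I then Gt i e else 0)))
      = ∑ i ∈ I, ((∑ j, Bf i e j * lam i j) - Gt i e) := by
    rw [← hZw, hfin, Finset.sum_add_distrib]
    have hring : ∀ S1 S2 S3 : ℝ, (S1 + S2) - (S2 + S3) = S1 - S3 := by intros; ring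
    rw [hring, ← Finset.sum_sub_distrib]
    have hcomb : ∀ i, ((if i ∈ I then (∑ j, Bf i e j * lam i j) else 0) - (if i ∈ I then Gt i e else 0))
        = if i ∈ I then ((∑ j, Bf i e j * lam i j) - Gt i e) else 0 := by
      intro i; by_cases hi : i ∈ I <;> simp [hi]
    simp only [hcomb]
    rw [Finset.sum_ite_mem, Finset.inter_eq_right.mpr hI]
  rw [hgoalL, hassemble]
end
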